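/- Let q ≥ 2 be an integer and let f : ℕ → ℂ be a q-multiplicative sequence with |f(n)| = 1 for all n, and suppose there exist constants c₀ > 0 and C₀ > 0 such that for all integers N ≥ 1 and all α ∈ ℝ, |∑_{n=0}^{N−1} f(n) e(nα)| ≤ C₀·N^{1−c₀}. Then for every r ≥ 0 the limit γ_r := lim_{N→∞} (1/N)·∑_{n=0}^{N−1} f(n+r)·conj(f(n)) exists, and there exist constants c > 0 and C > 0 such that for every integer R ≥ 1, (1/R)·∑_{r=0}^{R−1} |γ_r|² ≤ C·R^{−c}. -/

import Mathlib

open Finset Complex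

noncomputable section

/-- A sequence is `q`-multiplicative if `f (m + n) = f m * f n` whenever
`m < q ^ t` and `q ^ t ∣ n`. -/
def QMult (q : ℕ) (f : ℕ → ℂ) : Prop :=
  ∀ t m n : ℕ, m < q ^ t → q ^ t ∣ n → f (m + n) = f m * f n

/-- `e x = exp (2 π i x)`. -/
def e (x : ℝ) : ℂ := Complex.exp (2 * Real.pi * Complex.I * x)

/-- The weight `|ω|` of `ω ∈ {0,1}^s`: the number of coordinates equal to `1`. -/
def wt {s : ℕ} (ω : Fin s → Bool) : ℕ := (Finset.univ.filter fun i => ω i = true).card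

/-- The vertex `n₀ + ω₁ n₁ + ⋯ + ω_s n_s` of a parallelepiped. -/
def vertex (s : ℕ) (n : Fin (s + 1) → ℤ) (ω : Fin s → Bool) : ℤ :=
  n 0 + ∑ i : Fin s, if ω i then n i.succ else 0

/-- The set `Π_s(N)` of (s+1)-tuples all of whose associated vertices lie in `[0, N)`.
(Any such tuple automatically has all entries in `[-N, N]`.) -/
def PiSet (s N : ℕ) : Finset (Fin (s + 1) → ℤ) :=
  (Finset.Icc (fun _ => -(N : ℤ)) fun _ => (N : ℤ)).filter fun n =>
    ∀ ω : Fin s → Bool, 0 ≤ vertex s n ω ∧ vertex s n ω < N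

/-- The Gowers product `∏_ω conj^{|ω|} f(n₀ + ω·n)`. -/
def gowersTerm (s : ℕ) (f : ℕ → ℂ) (n : Fin (s + 1) → ℤ) : ℂ :=
  ∏ ω : Fin s → Bool, (starRingEnd ℂ)^[wt ω] (f (vertex s n ω).toNat)

/-- The Gowers average `‖f‖_{U^s[N]}^{2^s}` (as a complex number; it is in fact
real and nonnegative). -/
def gowersAvg (s N : ℕ) (f : ℕ → ℂ) : ℂ :=
  (∑ n ∈ PiSet s N, gowersTerm s f n) / (PiSet s N).card

/-- The Gowers uniformity norm `‖f‖_{U^s[N]}`. -/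
def gowersNorm (s N : ℕ) (f : ℕ → ℂ) : ℝ :=
  (gowersAvg s N f).re ^ ((1 : ℝ) / 2 ^ s)

/-- Sum of digits of `n` in base `q`. -/
def digitSum (q n : ℕ) : ℕ := (Nat.digits q n).sum

end



open Filter

-- ===== auxiliary machinery =====

set_option linter.unusedSectionVars false
set_option maxHeartbeats 1000000

section EAux

lemma e_add (x y : ℝ) : e (x + y) = e x * e y := by
  rw [e, e, e, ← Complex.exp_add]; congr 1; push_cast; ring

lemma e_pow (x : ℝ) (k : ℕ) : e x ^ k = e (k * x) := by
  rw [e, e, ← Complex.exp_nat_mul]; congr 1; push_cast; ring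

lemma e_int (j : ℤ) : e j = 1 := by
  rw [e]
  convert Complex.exp_int_mul_two_pi_mul_I j using 2
  push_cast; ring

lemma conj_e (x : ℝ) : (starRingEnd ℂ) (e x) = e (-x) := by
  rw [e, e, ← Complex.exp_conj]
  congr 1
  simp only [map_mul, Complex.conj_I, Complex.conj_ofReal, map_ofNat]
  push_cast; ring

lemma abs_e (x : ℝ) : ‖e x‖ = 1 := by
  rw [e, Complex.norm_exp]
  have : (2 * ↑Real.pi * Complex.I * ↑x).re = 0 := by
    simp [Complex.mul_re, Complex.mul_im]
  rw [this, Real.exp_zero]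

end EAux

lemma int_eq_zero_of_dvd_of_lt {M x : ℤ} (hM : 0 < M) (h1 : -M < x) (h2 : x < M)
    (hd : M ∣ x) : x = 0 := by
  obtain ⟨c, rfl⟩ := hd
  have hc1 : c < 1 := by nlinarith
  have hc2 : -1 < c := by nlinarith
  have : c = 0 := by omega
  simp [this]

lemma orth (M : ℕ) (hM : 0 < M) (j : ℤ) :
    ∑ k ∈ Finset.range M, e ((j : ℝ) * k / M) = if (M : ℤ) ∣ j then (M : ℂ) else 0 := by
  have hM0 : (M : ℝ) ≠ 0 := Nat.cast_ne_zero.mpr hM.ne'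
  have hterm : ∀ k : ℕ, e ((j : ℝ) * k / M) = e ((j : ℝ) / M) ^ k := by
    intro k; rw [e_pow]; congr 1; ring
  simp only [hterm]
  by_cases hd : (M : ℤ) ∣ j
  · obtain ⟨c, rfl⟩ := hd
    rw [if_pos ⟨c, rfl⟩]
    have h1 : ((((M : ℤ) * c : ℤ) : ℝ)) / M = ((c : ℤ) : ℝ) := by push_cast; field_simp
    rw [h1, e_int]
    simp
  · rw [if_neg hd]
    have hz : e ((j : ℝ) / M) ≠ 1 := by
      intro h
      rw [e, Complex.exp_eq_one_iff] at h
      obtain ⟨n, hn⟩ := h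
      apply hd
      have hne : (2 * (Real.pi : ℂ) * Complex.I) ≠ 0 := by
        simp [Real.pi_ne_zero, Complex.I_ne_zero]
      have h2 : (((j : ℝ) / M : ℝ) : ℂ) = (n : ℂ) := by
        apply mul_left_cancel₀ hne
        rw [hn]; ring
      have h3 : (j : ℝ) / M = (n : ℝ) := by exact_mod_cast h2
      have h4 : (j : ℝ) = (n : ℝ) * M := by field_simp at h3; linarith
      have h5 : j = n * M := by exact_mod_cast h4
      exact ⟨n, by rw [h5]; ring⟩
    rw [geom_sum_eq hz]
    have hM1 : e ((j : ℝ) / M) ^ M = 1 := by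
      rw [e_pow]
      have : (M : ℝ) * ((j : ℝ) / M) = ((j : ℤ) : ℝ) := by field_simp
      rw [this, e_int]
    rw [hM1]
    simp

/-- correlation sum -/
-- (block decomposition)
noncomputable def T (f : ℕ → ℂ) (r N : ℕ) : ℂ :=
  ∑ n ∈ Finset.range N, f (n + r) * (starRingEnd ℂ) (f n)

lemma block_decomp (f : ℕ → ℂ) (r m n : ℕ) :
    T f r (m + n) = T f r m + ∑ i ∈ Finset.range n,
      f (m + i + r) * (starRingEnd ℂ) (f (m + i)) := by
  rw [T, T, Finset.sum_range_add]

section TAux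
variable {q : ℕ} {f : ℕ → ℂ} (hq : 2 ≤ q) (hf : QMult q f)
  (hmod : ∀ n, ‖f n‖ = 1)

lemma unit_term (hmod : ∀ n, ‖f n‖ = 1) (n : ℕ) :
    f n * (starRingEnd ℂ) (f n) = 1 := by
  rw [Complex.mul_conj]
  norm_cast
  rw [← Complex.sq_norm, hmod]; norm_num

lemma abs_term (hmod : ∀ n, ‖f n‖ = 1) (m n : ℕ) :
    ‖f m * (starRingEnd ℂ) (f n)‖ = 1 := by
  rw [norm_mul, hmod, Complex.norm_conj, hmod, mul_one]

include hq hf hmod in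
lemma shift_lemma (a t N' r : ℕ) (hN' : N' ≤ q ^ t) :
    ‖(∑ n ∈ Finset.range N',
      f (a * q ^ t + n + r) * (starRingEnd ℂ) (f (a * q ^ t + n))) - T f r N'‖ ≤ 2 * r := by
  rw [T, ← Finset.sum_sub_distrib]
  calc ‖∑ n ∈ Finset.range N',
        (f (a * q ^ t + n + r) * (starRingEnd ℂ) (f (a * q ^ t + n))
          - f (n + r) * (starRingEnd ℂ) (f n))‖
      ≤ ∑ n ∈ Finset.range N', ‖f (a * q ^ t + n + r) * (starRingEnd ℂ) (f (a * q ^ t + n))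
          - f (n + r) * (starRingEnd ℂ) (f n)‖ := norm_sum_le _ _
    _ ≤ ∑ n ∈ Finset.range N', (if q ^ t ≤ n + r then (2:ℝ) else 0) := by
        apply Finset.sum_le_sum
        intro n hn
        simp only [Finset.mem_range] at hn
        by_cases h : q ^ t ≤ n + r
        · rw [if_pos h]
          have hb := norm_sub_le (f (a * q ^ t + n + r) * (starRingEnd ℂ) (f (a * q ^ t + n)))
            (f (n + r) * (starRingEnd ℂ) (f n))
          rw [abs_term hmod, abs_term hmod] at hb
          linarith
        · rw [if_neg h]
          push_neg at h
          have h1 : f (a * q ^ t + n) = f n * f (a * q ^ t) := by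
            have := hf t n (a * q ^ t) (lt_of_lt_of_le hn hN') (dvd_mul_left _ _)
            rw [← this, add_comm]
          have h2 : f (a * q ^ t + n + r) = f (n + r) * f (a * q ^ t) := by
            have := hf t (n + r) (a * q ^ t) h (dvd_mul_left _ _)
            rw [← this]; ring_nf
          rw [h1, h2, map_mul]
          have : f (n + r) * f (a * q ^ t) * ((starRingEnd ℂ) (f n) * (starRingEnd ℂ) (f (a * q ^ t)))
              = (f (n + r) * (starRingEnd ℂ) (f n)) *
                (f (a * q ^ t) * (starRingEnd ℂ) (f (a * q ^ t))) := by ring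
          rw [this, unit_term hmod, mul_one, sub_self, norm_zero]
    _ ≤ 2 * r := by
        rw [← Finset.sum_filter]
        rw [Finset.sum_const, nsmul_eq_mul]
        have hcard : ((Finset.range N').filter fun n => q ^ t ≤ n + r).card ≤ r := by
          have hsub : ((Finset.range N').filter fun n => q ^ t ≤ n + r) ⊆
              Finset.Ico (q ^ t - r) N' := by
            intro n hn
            simp only [Finset.mem_filter, Finset.mem_range] at hn
            rw [Finset.mem_Ico]
            omega
          calc _ ≤ (Finset.Ico (q ^ t - r) N').card := Finset.card_le_card hsub
            _ = N' - (q ^ t - r) := Nat.card_Ico _ _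
            _ ≤ r := by omega
        calc (((Finset.range N').filter fun n => q ^ t ≤ n + r).card : ℝ) * 2
            ≤ (r : ℝ) * 2 := by
              apply mul_le_mul_of_nonneg_right _ (by norm_num)
              exact_mod_cast hcard
          _ = 2 * r := by ring



include hq hf hmod in
lemma multi_block (a t r : ℕ) :
    ‖T f r (a * q ^ t) - a * T f r (q ^ t)‖ ≤ 2 * r * a := by
  induction a with
  | zero => simp [T]
  | succ a ih =>
    have hd : T f r ((a + 1) * q ^ t) = T f r (a * q ^ t) + ∑ i ∈ Finset.range (q ^ t),
        f (a * q ^ t + i + r) * (starRingEnd ℂ) (f (a * q ^ t + i)) := by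
      have : (a + 1) * q ^ t = a * q ^ t + q ^ t := by ring
      rw [this, block_decomp]
    rw [hd]
    have hs := shift_lemma hq hf hmod a t (q ^ t) r le_rfl
    calc ‖T f r (a * q ^ t) + (∑ i ∈ Finset.range (q ^ t),
          f (a * q ^ t + i + r) * (starRingEnd ℂ) (f (a * q ^ t + i))) - (a + 1 : ℕ) * T f r (q ^ t)‖
        = ‖(T f r (a * q ^ t) - a * T f r (q ^ t)) + ((∑ i ∈ Finset.range (q ^ t),
          f (a * q ^ t + i + r) * (starRingEnd ℂ) (f (a * q ^ t + i))) - T f r (q ^ t))‖ := by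
          congr 1; push_cast; ring
      _ ≤ ‖T f r (a * q ^ t) - a * T f r (q ^ t)‖ + ‖(∑ i ∈ Finset.range (q ^ t),
          f (a * q ^ t + i + r) * (starRingEnd ℂ) (f (a * q ^ t + i))) - T f r (q ^ t)‖ :=
          norm_add_le _ _
      _ ≤ 2 * r * a + 2 * r := by
          apply add_le_add ih hs
      _ ≤ 2 * r * (a + 1 : ℕ) := by push_cast; nlinarith [Nat.cast_nonneg (α := ℝ) r]

end TAux

section DAux
variable {q : ℕ} {f : ℕ → ℂ} (hq : 2 ≤ q) (hf : QMult q f)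
  (hmod : ∀ n, ‖f n‖ = 1)

include hq hf hmod in
lemma gamma_exists (r : ℕ) : ∃ g : ℂ,
    Tendsto (fun t => T f r (q ^ t) / ((q : ℂ) ^ t)) atTop (nhds g) ∧
    ∀ t, ‖T f r (q ^ t) - (q : ℂ) ^ t * g‖ ≤ 4 * r := by
  have hq0 : (0 : ℝ) < q := by positivity
  have hqc : ((q : ℂ)) ≠ 0 := by
    simp only [ne_eq, Nat.cast_eq_zero]; omega
  have hqinv : (q : ℝ)⁻¹ < 1 := by
    rw [inv_lt_one_iff₀]; right; exact_mod_cast by omega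
  set A : ℕ → ℂ := fun t => T f r (q ^ t) / ((q : ℂ) ^ t) with hA
  have hdist : ∀ t, dist (A t) (A (t + 1)) ≤ (2 * r) * ((q : ℝ)⁻¹) ^ t := by
    intro t
    have key := multi_block hq hf hmod q t r
    have hqt : ((q : ℂ) ^ t) ≠ 0 := pow_ne_zero _ hqc
    have hqt1 : ((q : ℂ) ^ (t + 1)) ≠ 0 := pow_ne_zero _ hqc
    have heq : A t - A (t + 1) =
        ((q : ℂ) * T f r (q ^ t) - T f r (q ^ (t + 1))) / ((q : ℂ) ^ (t + 1)) := by
      rw [hA]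
      field_simp
      ring
    rw [dist_eq, heq, norm_div]
    have habs : ‖(q : ℂ) ^ (t + 1)‖ = (q : ℝ) ^ (t + 1) := by
      rw [norm_pow, Complex.norm_natCast]
    rw [habs]
    have hnum : ‖(q : ℂ) * T f r (q ^ t) - T f r (q ^ (t + 1))‖ ≤ 2 * r * q := by
      have h2 : q * q ^ t = q ^ (t + 1) := by ring
      calc ‖(q : ℂ) * T f r (q ^ t) - T f r (q ^ (t + 1))‖
          = ‖T f r (q * q ^ t) - (q : ℂ) * T f r (q ^ t)‖ := by
            rw [h2, norm_sub_rev]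
        _ ≤ 2 * r * q := multi_block hq hf hmod q t r
    rw [div_le_iff₀ (by positivity)]
    calc ‖(q : ℂ) * T f r (q ^ t) - T f r (q ^ (t + 1))‖ ≤ 2 * r * q := hnum
      _ = 2 * r * ((q:ℝ)⁻¹) ^ t * ((q:ℝ) ^ t * q) := by
          rw [inv_pow]
          field_simp
      _ = 2 * ↑r * ((q:ℝ)⁻¹) ^ t * (q:ℝ) ^ (t + 1) := by ring
  have hcauchy : CauchySeq A := cauchySeq_of_le_geometric _ _ hqinv hdist
  obtain ⟨g, hg⟩ := cauchySeq_tendsto_of_complete hcauchy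
  refine ⟨g, hg, fun t => ?_⟩
  have htail := dist_le_of_le_geometric_of_tendsto _ _ hqinv hdist hg t
  have hhalf : (1 : ℝ) - (q : ℝ)⁻¹ ≥ 1 / 2 := by
    have : (q : ℝ) ≥ 2 := by exact_mod_cast hq
    have hq0' : (0:ℝ) < q := by linarith
    rw [ge_iff_le, le_sub_comm]
    rw [inv_le_comm₀ hq0' (by norm_num)] at *
    linarith [inv_anti₀ (by norm_num : (0:ℝ) < 2) this]
  have h2 : dist (A t) g ≤ 4 * r * ((q : ℝ)⁻¹) ^ t := by
    calc dist (A t) g ≤ 2 * r * ((q:ℝ)⁻¹) ^ t / (1 - (q:ℝ)⁻¹) := htail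
      _ ≤ 2 * r * ((q:ℝ)⁻¹) ^ t / (1/2) := by
          apply div_le_div_of_nonneg_left (by positivity) (by norm_num) hhalf
      _ = 4 * r * ((q:ℝ)⁻¹) ^ t := by ring
  have hqt : ((q : ℂ) ^ t) ≠ 0 := pow_ne_zero _ hqc
  have : T f r (q ^ t) - (q : ℂ) ^ t * g = ((q : ℂ) ^ t) * (A t - g) := by
    rw [hA]; field_simp
  rw [this, norm_mul, norm_pow, Complex.norm_natCast]
  calc (q:ℝ) ^ t * ‖A t - g‖ = (q:ℝ) ^ t * dist (A t) g := by rw [dist_eq]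
    _ ≤ (q:ℝ) ^ t * (4 * r * ((q:ℝ)⁻¹) ^ t) := by
        apply mul_le_mul_of_nonneg_left h2 (by positivity)
    _ = 4 * r * ((q:ℝ) ^ t * ((q:ℝ)⁻¹) ^ t) := by ring
    _ = 4 * r := by
        rw [← mul_pow, mul_inv_cancel₀ (ne_of_gt hq0), one_pow, mul_one]

end DAux

section EAux2
variable {q : ℕ} {f : ℕ → ℂ} (hq : 2 ≤ q) (hf : QMult q f)
  (hmod : ∀ n, ‖f n‖ = 1)

include hq hf hmod in
lemma general_bound (r : ℕ) (g : ℂ)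
    (hg : ∀ t, ‖T f r (q ^ t) - (q : ℂ) ^ t * g‖ ≤ 4 * r) :
    ∀ t : ℕ, ∀ N : ℕ, N < q ^ t → ‖T f r N - N * g‖ ≤ 8 * r * q * (t : ℝ) := by
  intro t
  induction t with
  | zero =>
    intro N hN
    rw [pow_zero] at hN
    interval_cases N
    simp [T]
  | succ t ih =>
    intro N hN
    have hqt : 0 < q ^ t := Nat.pow_pos (by omega)
    set a := N / q ^ t with ha
    set b := N % q ^ t with hb
    have hab : N = a * q ^ t + b := by
      rw [ha, hb, mul_comm]; exact (Nat.div_add_mod N (q ^ t)).symm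
    have haq : a < q := by
      rw [ha, Nat.div_lt_iff_lt_mul hqt]
      calc N < q ^ (t + 1) := hN
        _ = q * q ^ t := by ring
    have hbq : b < q ^ t := Nat.mod_lt _ hqt
    have hsplit : T f r N = T f r (a * q ^ t) + ∑ i ∈ Finset.range b,
        f (a * q ^ t + i + r) * (starRingEnd ℂ) (f (a * q ^ t + i)) := by
      rw [hab]; exact block_decomp f r _ _
    set S := ∑ i ∈ Finset.range b,
        f (a * q ^ t + i + r) * (starRingEnd ℂ) (f (a * q ^ t + i)) with hS
    have hdecomp : T f r N - N * g =
        (T f r (a * q ^ t) - a * T f r (q ^ t)) +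
        ((a : ℂ) * (T f r (q ^ t) - (q : ℂ) ^ t * g)) +
        (S - T f r b) + (T f r b - b * g) := by
      rw [hsplit]
      have hcast : (N : ℂ) = (a : ℂ) * (q : ℂ) ^ t + (b : ℂ) := by
        rw [hab]; push_cast; ring
      rw [hcast]; ring
    rw [hdecomp]
    have e1 := multi_block hq hf hmod a t r
    have e2 : ‖(a : ℂ) * (T f r (q ^ t) - (q : ℂ) ^ t * g)‖ ≤ a * (4 * r) := by
      rw [norm_mul, Complex.norm_natCast]
      exact mul_le_mul_of_nonneg_left (hg t) (by positivity)
    have e3 := shift_lemma hq hf hmod a t b r hbq.le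
    have e4 := ih b hbq
    have habs : ‖(T f r (a * q ^ t) - a * T f r (q ^ t)) +
        ((a : ℂ) * (T f r (q ^ t) - (q : ℂ) ^ t * g)) + (S - T f r b) + (T f r b - b * g)‖ ≤
        2 * r * a + a * (4 * r) + 2 * r + 8 * r * q * t := by
      calc _ ≤ ‖(T f r (a * q ^ t) - a * T f r (q ^ t)) +
            ((a : ℂ) * (T f r (q ^ t) - (q : ℂ) ^ t * g)) + (S - T f r b)‖ +
            ‖T f r b - b * g‖ := norm_add_le _ _
        _ ≤ ‖(T f r (a * q ^ t) - a * T f r (q ^ t)) +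
            ((a : ℂ) * (T f r (q ^ t) - (q : ℂ) ^ t * g))‖ +
            ‖S - T f r b‖ + ‖T f r b - b * g‖ := by
            gcongr; exact norm_add_le _ _
        _ ≤ ‖T f r (a * q ^ t) - a * T f r (q ^ t)‖ +
            ‖(a : ℂ) * (T f r (q ^ t) - (q : ℂ) ^ t * g)‖ +
            ‖S - T f r b‖ + ‖T f r b - b * g‖ := by
            gcongr; exact norm_add_le _ _
        _ ≤ 2 * r * a + a * (4 * r) + 2 * r + 8 * r * q * t := by
            gcongr
    refine habs.trans ?_
    have haR : (a : ℝ) ≤ (q : ℝ) - 1 := by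
      have : (a : ℝ) + 1 ≤ q := by exact_mod_cast haq
      linarith
    have hrR : (0 : ℝ) ≤ r := Nat.cast_nonneg r
    have hqR : (1 : ℝ) ≤ q := by exact_mod_cast (by omega : 1 ≤ q)
    push_cast
    nlinarith [mul_nonneg hrR (sub_nonneg.mpr hqR)]

include hq hf hmod in
lemma tendsto_T (r : ℕ) (g : ℂ)
    (hbd : ∀ t : ℕ, ∀ N : ℕ, N < q ^ t → ‖T f r N - N * g‖ ≤ 8 * r * q * (t : ℝ)) :
    Tendsto (fun N : ℕ => T f r N / N) atTop (nhds g) := by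
  have hq1 : 1 < q := by omega
  rw [tendsto_iff_dist_tendsto_zero]
  apply squeeze_zero' (Eventually.of_forall fun N => dist_nonneg)
    (g := fun N : ℕ => 8 * r * q * (((Nat.log q N : ℝ) + 1) / N))
  · filter_upwards [eventually_ge_atTop 1] with N hN
    have hN0 : (0 : ℝ) < N := by exact_mod_cast hN
    have hNlt : N < q ^ (Nat.log q N + 1) := Nat.lt_pow_succ_log_self hq1 N
    have := hbd (Nat.log q N + 1) N hNlt
    have hdist : dist (T f r N / N) g = ‖T f r N - N * g‖ / N := by
      rw [dist_eq]
      have hNc : (N : ℂ) ≠ 0 := Nat.cast_ne_zero.mpr (by omega)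
      have : T f r N / N - g = (T f r N - N * g) / (N : ℂ) := by
        rw [eq_div_iff hNc, sub_mul, div_mul_cancel₀ _ hNc]; ring
      rw [this, norm_div, Complex.norm_natCast]
    rw [hdist, div_le_iff₀ hN0]
    calc ‖T f r N - N * g‖ ≤ 8 * r * q * (Nat.log q N + 1) := by
          exact_mod_cast this
      _ = 8 * ↑r * ↑q * (((Nat.log q N : ℝ) + 1) / ↑N) * ↑N := by
          field_simp
  · have hinner : Tendsto (fun N : ℕ => ((Nat.log q N : ℝ) + 1) / N) atTop (nhds 0) := by
      apply squeeze_zero' (g := fun N : ℕ => ((Real.log N / Real.log 2) + 1) / N)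
      · filter_upwards [eventually_ge_atTop 1] with N hN
        positivity
      · filter_upwards [eventually_ge_atTop 1] with N hN
        have hN0 : (0 : ℝ) < N := by exact_mod_cast hN
        have hlog : ((Nat.log q N : ℝ)) ≤ Real.log N / Real.log 2 := by
          have h1 : Nat.log q N ≤ Nat.log 2 N := Nat.log_anti_left one_lt_two hq
          have h2 : (2 : ℕ) ^ Nat.log 2 N ≤ N := Nat.pow_log_le_self 2 (by omega)
          have h3 : Real.log ((2 : ℝ) ^ Nat.log 2 N) ≤ Real.log N :=
            Real.log_le_log (by positivity) (by exact_mod_cast h2)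
          rw [Real.log_pow] at h3
          have hlog2 : 0 < Real.log 2 := Real.log_pos (by norm_num)
          rw [le_div_iff₀ hlog2]
          calc (Nat.log q N : ℝ) * Real.log 2 ≤ (Nat.log 2 N : ℝ) * Real.log 2 :=
                mul_le_mul_of_nonneg_right (by exact_mod_cast h1) hlog2.le
            _ ≤ Real.log N := h3
        gcongr
      · have h1 : Tendsto (fun x : ℝ => Real.log x ^ 1 / (1 * x + 0)) atTop (nhds 0) :=
          Real.tendsto_pow_log_div_mul_add_atTop 1 0 1 one_ne_zero
        have h1' : Tendsto (fun N : ℕ => Real.log N / N) atTop (nhds 0) := by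
          have := h1.comp (tendsto_natCast_atTop_atTop (R := ℝ))
          simpa [Function.comp_def] using this
        have h2 : Tendsto (fun N : ℕ => (1 : ℝ) / N) atTop (nhds 0) :=
          tendsto_one_div_atTop_nhds_zero_nat
        have h3 : Tendsto (fun N : ℕ => Real.log N / N * (1 / Real.log 2) + 1 / N)
            atTop (nhds 0) := by
          simpa using (h1'.mul_const (1 / Real.log 2)).add h2
        apply h3.congr'
        filter_upwards [eventually_ge_atTop 1] with N hN
        have hN0 : (0 : ℝ) < N := by exact_mod_cast hN
        have hlog2 : Real.log 2 ≠ 0 := ne_of_gt (Real.log_pos (by norm_num))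
        field_simp
    have := hinner.const_mul (8 * (r : ℝ) * q)
    simpa using this

end EAux2


lemma master (M K₁ K₂ s : ℕ) (hM : 0 < M) (hK₁ : K₁ ≤ M) (hK₂ : K₂ ≤ M) (hs : K₂ + s ≤ M)
    (A B : ℕ → ℂ) :
    ∑ k ∈ Finset.range M,
      ((∑ m ∈ Finset.range K₁, A m * e (m * ((k : ℝ) / M))) *
       (starRingEnd ℂ) (∑ n ∈ Finset.range K₂, B n * e (n * ((k : ℝ) / M))) *
       e (-((s : ℝ) * k / M)))
    = M * ∑ n ∈ Finset.range K₂,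
        (if n + s < K₁ then A (n + s) * (starRingEnd ℂ) (B n) else 0) := by
  have hstep1 : ∀ k : ℕ,
      ((∑ m ∈ Finset.range K₁, A m * e (m * ((k : ℝ) / M))) *
       (starRingEnd ℂ) (∑ n ∈ Finset.range K₂, B n * e (n * ((k : ℝ) / M))) *
       e (-((s : ℝ) * k / M)))
      = ∑ m ∈ Finset.range K₁, ∑ n ∈ Finset.range K₂,
          (A m * (starRingEnd ℂ) (B n)) * e ((((m : ℤ) - n - s : ℤ) : ℝ) * k / M) := by
    intro k
    rw [map_sum, Finset.sum_mul_sum, Finset.sum_mul]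
    apply Finset.sum_congr rfl
    intro m _
    rw [Finset.sum_mul]
    apply Finset.sum_congr rfl
    intro n _
    rw [map_mul, conj_e]
    have harg : e (↑m * ((k : ℝ) / M)) * e (-(↑n * ((k : ℝ) / M))) * e (-((s : ℝ) * k / M))
        = e ((((m : ℤ) - n - s : ℤ) : ℝ) * k / M) := by
      rw [← e_add, ← e_add]
      congr 1
      push_cast
      ring
    calc A m * e (↑m * ((k : ℝ) / M)) * ((starRingEnd ℂ) (B n) * e (-(↑n * ((k : ℝ) / M)))) *
          e (-((s : ℝ) * k / M))
        = (A m * (starRingEnd ℂ) (B n)) *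
          (e (↑m * ((k : ℝ) / M)) * e (-(↑n * ((k : ℝ) / M))) * e (-((s : ℝ) * k / M))) := by
          ring
      _ = _ := by rw [harg]
  simp only [hstep1]
  rw [Finset.sum_comm]
  have hswap2 : ∀ m, ∑ k ∈ Finset.range M, ∑ n ∈ Finset.range K₂,
      (A m * (starRingEnd ℂ) (B n)) * e ((((m : ℤ) - n - s : ℤ) : ℝ) * k / M)
      = ∑ n ∈ Finset.range K₂, ∑ k ∈ Finset.range M,
      (A m * (starRingEnd ℂ) (B n)) * e ((((m : ℤ) - n - s : ℤ) : ℝ) * k / M) :=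
    fun m => Finset.sum_comm
  simp only [hswap2]
  have hinner : ∀ m ∈ Finset.range K₁, ∀ n ∈ Finset.range K₂,
      ∑ k ∈ Finset.range M, (A m * (starRingEnd ℂ) (B n)) *
        e ((((m : ℤ) - n - s : ℤ) : ℝ) * k / M)
      = if m = n + s then (A m * (starRingEnd ℂ) (B n)) * M else 0 := by
    intro m hm n hn
    rw [← Finset.mul_sum, orth M hM]
    simp only [Finset.mem_range] at hm hn
    by_cases hd : (M : ℤ) ∣ ((m : ℤ) - n - s)
    · have h0 : (m : ℤ) - n - s = 0 := by
        apply int_eq_zero_of_dvd_of_lt (by exact_mod_cast hM) _ _ hd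
        · have h1 : (n : ℤ) < K₂ := by exact_mod_cast hn
          have h2 : (K₂ : ℤ) + s ≤ M := by exact_mod_cast hs
          omega
        · have : (m : ℤ) < M := by exact_mod_cast lt_of_lt_of_le hm hK₁
          omega
      have hmns : m = n + s := by omega
      rw [if_pos hd, if_pos hmns]
    · rw [if_neg hd, if_neg, mul_zero]
      intro hmns
      apply hd
      rw [hmns]
      push_cast
      simp
  rw [Finset.sum_congr rfl (fun m hm => Finset.sum_congr rfl (fun n hn => hinner m hm n hn))]
  rw [Finset.sum_comm]
  rw [Finset.mul_sum]
  apply Finset.sum_congr rfl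
  intro n hn
  have : ∑ m ∈ Finset.range K₁, (if m = n + s then (A m * (starRingEnd ℂ) (B n)) * (M : ℂ) else 0)
      = if (n + s) ∈ Finset.range K₁ then (A (n + s) * (starRingEnd ℂ) (B n)) * (M : ℂ) else 0 :=
    Finset.sum_ite_eq' _ _ _
  rw [this]
  by_cases h : n + s < K₁
  · rw [if_pos (Finset.mem_range.mpr h), if_pos h]; ring
  · rw [if_neg (fun hc => h (Finset.mem_range.mp hc)), if_neg h, mul_zero]

lemma e_zero : e 0 = 1 := by simpa using e_int 0

lemma parseval_bound {f : ℕ → ℂ} (hmod : ∀ n, ‖f n‖ = 1)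
    (N R : ℕ) (hN : 1 ≤ N) (hR : 1 ≤ R) (X : ℝ) (hX : 0 ≤ X)
    (hF : ∀ k : ℕ, ‖∑ m ∈ Finset.range (N + R),
      f m * e (↑m * ((k : ℝ) / ↑(N + R)))‖ ≤ X) :
    ∑ r ∈ Finset.range R, Complex.normSq (T f r N) ≤ X ^ 2 * N := by
  set M := N + R with hMdef
  have hM : 0 < M := by omega
  set F : ℕ → ℂ := fun k => ∑ m ∈ Finset.range M, f m * e (↑m * ((k : ℝ) / ↑M)) with hFdef
  set G : ℕ → ℂ := fun k => ∑ n ∈ Finset.range N, f n * e (↑n * ((k : ℝ) / ↑M)) with hGdef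
  set d : ℕ → ℂ := fun k => F k * (starRingEnd ℂ) (G k) with hddef
  set u : ℕ → ℂ := fun r => ∑ k ∈ Finset.range M, d k * e (-((r : ℝ) * k / M)) with hudef
  -- (1) u r = M * T f r N for r < R
  have h1 : ∀ r, r < R → u r = (M : ℂ) * T f r N := by
    intro r hr
    have := master M M N r hM le_rfl (by omega) (by omega) f f
    rw [hudef]
    simp only []
    rw [this, T]
    congr 1
    apply Finset.sum_congr rfl
    intro n hn
    rw [Finset.mem_range] at hn
    rw [if_pos (by omega)]
  -- (2) Parseval: ∑_{r<M} normSq (u r) = M * ∑_k normSq (d k)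
  have h2 : ∑ r ∈ Finset.range M, Complex.normSq (u r)
      = M * ∑ k ∈ Finset.range M, Complex.normSq (d k) := by
    have hmain := master M M M 0 hM le_rfl le_rfl (by omega)
      (fun k => (starRingEnd ℂ) (d k)) (fun k => (starRingEnd ℂ) (d k))
    have hconj : ∀ r : ℕ, (∑ k ∈ Finset.range M,
        (starRingEnd ℂ) (d k) * e (↑k * ((r : ℝ) / ↑M))) = (starRingEnd ℂ) (u r) := by
      intro r
      rw [hudef]
      simp only []
      rw [map_sum]
      apply Finset.sum_congr rfl
      intro k _
      rw [show ((k : ℝ) * ((r : ℝ) / (M : ℝ))) = -(-((r : ℝ) * (k : ℝ) / (M : ℝ))) from by ring,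
        ← conj_e, ← map_mul]
    have hz : ∀ r : ℕ, e (-((0 : ℕ) * (r : ℝ) / M)) = 1 := by
      intro r
      have : -(((0 : ℕ) : ℝ) * (r : ℝ) / M) = 0 := by push_cast; ring
      rw [this, e_zero]
    simp only [hconj, hz, mul_one, add_zero] at hmain
    have hL : ∑ r ∈ Finset.range M, (starRingEnd ℂ) (u r) *
        (starRingEnd ℂ) ((starRingEnd ℂ) (u r)) =
        ∑ r ∈ Finset.range M, (Complex.normSq (u r) : ℂ) := by
      apply Finset.sum_congr rfl
      intro r _
      rw [Complex.conj_conj, mul_comm, Complex.mul_conj]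
    have hR2 : ∑ n ∈ Finset.range M, (if n < M then (starRingEnd ℂ) (d n) *
        (starRingEnd ℂ) ((starRingEnd ℂ) (d n)) else 0) =
        ∑ n ∈ Finset.range M, (Complex.normSq (d n) : ℂ) := by
      apply Finset.sum_congr rfl
      intro n hn
      rw [Finset.mem_range] at hn
      rw [if_pos hn, Complex.conj_conj, mul_comm, Complex.mul_conj]
    rw [hL, hR2] at hmain
    exact_mod_cast hmain
  -- (3) ∑_k normSq (G k) = M * N
  have h3 : ∑ k ∈ Finset.range M, Complex.normSq (G k) = M * N := by
    have hmain := master M N N 0 hM (by omega) (by omega) (by omega) f f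
    have hz : ∀ k : ℕ, e (-((0 : ℕ) * (k : ℝ) / M)) = 1 := by
      intro k
      have : -(((0 : ℕ) : ℝ) * (k : ℝ) / M) = 0 := by push_cast; ring
      rw [this, e_zero]
    simp only [hz, mul_one] at hmain
    have hL : ∑ k ∈ Finset.range M, G k * (starRingEnd ℂ) (G k)
        = ∑ k ∈ Finset.range M, (Complex.normSq (G k) : ℂ) := by
      apply Finset.sum_congr rfl
      intro k _
      rw [Complex.mul_conj]
    have hR2 : ∑ n ∈ Finset.range N, (if n + 0 < N then f (n + 0) * (starRingEnd ℂ) (f n) else 0)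
        = ∑ n ∈ Finset.range N, (1 : ℂ) := by
      apply Finset.sum_congr rfl
      intro n hn
      rw [Finset.mem_range] at hn
      rw [if_pos (by omega), add_zero, unit_term hmod]
    rw [hGdef] at hL
    rw [hL, hR2] at hmain
    have : ∑ n ∈ Finset.range N, (1 : ℂ) = (N : ℂ) := by simp
    rw [this] at hmain
    exact_mod_cast hmain
  -- (4) normSq d k ≤ X^2 * normSq (G k)
  have h4 : ∀ k, Complex.normSq (d k) ≤ X ^ 2 * Complex.normSq (G k) := by
    intro k
    rw [hddef]
    simp only []
    rw [Complex.normSq_mul, Complex.normSq_conj]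
    apply mul_le_mul_of_nonneg_right _ (Complex.normSq_nonneg _)
    rw [← Complex.sq_norm]
    have := hF k
    nlinarith [norm_nonneg (F k)]
  -- assemble
  have hMR : (0 : ℝ) < (M : ℝ) := by exact_mod_cast hM
  have hstep : (M : ℝ) ^ 2 * ∑ r ∈ Finset.range R, Complex.normSq (T f r N)
      ≤ X ^ 2 * ((M : ℝ) ^ 2 * N) := by
    have heq : (M : ℝ) ^ 2 * ∑ r ∈ Finset.range R, Complex.normSq (T f r N)
        = ∑ r ∈ Finset.range R, Complex.normSq (u r) := by
      rw [Finset.mul_sum]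
      apply Finset.sum_congr rfl
      intro r hr
      rw [Finset.mem_range] at hr
      rw [h1 r hr, Complex.normSq_mul]
      have : Complex.normSq ((M : ℂ)) = (M : ℝ) ^ 2 := by
        rw [← Complex.sq_norm, Complex.norm_natCast]
      rw [this]
    rw [heq]
    calc ∑ r ∈ Finset.range R, Complex.normSq (u r)
        ≤ ∑ r ∈ Finset.range M, Complex.normSq (u r) := by
          apply Finset.sum_le_sum_of_subset_of_nonneg
          · apply Finset.range_subset_range.mpr; omega
          · intro r _ _; exact Complex.normSq_nonneg _
      _ = M * ∑ k ∈ Finset.range M, Complex.normSq (d k) := h2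
      _ ≤ M * ∑ k ∈ Finset.range M, X ^ 2 * Complex.normSq (G k) := by
          apply mul_le_mul_of_nonneg_left _ (by positivity)
          exact Finset.sum_le_sum fun k _ => h4 k
      _ = M * (X ^ 2 * (M * N)) := by rw [← Finset.mul_sum, h3]
      _ = X ^ 2 * ((M : ℝ) ^ 2 * N) := by ring
  have hM2 : (0 : ℝ) < (M : ℝ) ^ 2 := by positivity
  have heq2 : X ^ 2 * ((M : ℝ) ^ 2 * N) = (M : ℝ) ^ 2 * (X ^ 2 * N) := by ring
  rw [heq2] at hstep
  exact le_of_mul_le_mul_left hstep hM2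


theorem stmt19 (q : ℕ) (hq : 2 ≤ q) (f : ℕ → ℂ) (hf : QMult q f)
    (hmod : ∀ n, ‖f n‖ = 1)
    (hGelfond : ∃ c₀ > (0 : ℝ), ∃ C₀ > (0 : ℝ), ∀ N : ℕ, 1 ≤ N → ∀ α : ℝ,
      ‖∑ n ∈ Finset.range N, f n * e (n * α)‖ ≤ C₀ * (N : ℝ) ^ ((1 : ℝ) - c₀)) :
    ∃ γ : ℕ → ℂ,
      (∀ r : ℕ, Filter.Tendsto
        (fun N : ℕ => (∑ n ∈ Finset.range N, f (n + r) * (starRingEnd ℂ) (f n)) / N)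
        Filter.atTop (nhds (γ r))) ∧
      ∃ c > (0 : ℝ), ∃ C > (0 : ℝ), ∀ R : ℕ, 1 ≤ R →
        (∑ r ∈ Finset.range R, ‖γ r‖ ^ 2) / R ≤ C * (R : ℝ) ^ (-c) := by
  obtain ⟨c₀, hc₀, C₀, hC₀, hGel⟩ := hGelfond
  set c' : ℝ := min c₀ (1/2) with hc'def
  have hc'pos : 0 < c' := lt_min hc₀ (by norm_num)
  have hc'le : c' ≤ 1/2 := min_le_right _ _
  have hGel' : ∀ N : ℕ, 1 ≤ N → ∀ α : ℝ, ‖∑ n ∈ Finset.range N, f n * e (n * α)‖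
      ≤ C₀ * (N : ℝ) ^ ((1 : ℝ) - c') := by
    intro N hN α
    refine (hGel N hN α).trans ?_
    apply mul_le_mul_of_nonneg_left _ hC₀.le
    apply Real.rpow_le_rpow_of_exponent_le (by exact_mod_cast hN)
    have := min_le_left c₀ (1/2)
    linarith
  choose γ hγ1 hγ2 using fun r => gamma_exists hq hf hmod r
  refine ⟨γ, ?_, ?_⟩
  · intro r
    exact tendsto_T hq hf hmod r (γ r) (general_bound hq hf hmod r (γ r) (hγ2 r))
  refine ⟨c', hc'pos, 8 * C₀ ^ 2 * (q : ℝ) ^ 3 + 32, by positivity, ?_⟩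
  intro R hR
  -- basic positivity
  have hq1R : (1 : ℝ) ≤ q := by exact_mod_cast (by omega : 1 ≤ q)
  have hq0R : (0 : ℝ) < q := by linarith
  have hR1 : (1 : ℝ) ≤ (R : ℝ) := by exact_mod_cast hR
  have hR0 : (0 : ℝ) < (R : ℝ) := by linarith
  have h1c : (0 : ℝ) < 1 - c' := by linarith
  set a : ℝ := 1 / (1 - c') with hadef
  have ha0 : 0 < a := by positivity
  have ha1 : 1 ≤ a := by rw [hadef, le_div_iff₀ h1c]; linarith
  have ha2 : a ≤ 2 := by rw [hadef, div_le_iff₀ h1c]; linarith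
  set en : ℕ := Nat.log q R + 1 with hendef
  set lgr : ℝ := (en : ℝ) with hlgrdef
  have hlgr0 : 0 ≤ lgr := by positivity
  set L : ℕ := ⌈a * lgr⌉₊ with hLdef
  set NN : ℕ := q ^ L with hNNdef
  have hNN1 : 1 ≤ NN := Nat.one_le_pow _ _ (by omega)
  have hNN0 : (0 : ℝ) < (NN : ℝ) := by exact_mod_cast hNN1
  have hNNR : (NN : ℝ) = (q : ℝ) ^ (L : ℝ) := by
    rw [hNNdef, Real.rpow_natCast]; push_cast; ring
  have hqlgr : (q : ℝ) ^ lgr = ((q ^ en : ℕ) : ℝ) := by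
    rw [hlgrdef, Real.rpow_natCast]; push_cast; ring
  have hRlow : (R : ℝ) ≤ (q : ℝ) ^ lgr := by
    rw [hqlgr]
    exact_mod_cast (Nat.lt_pow_succ_log_self (by omega) R).le
  have hup : ((q ^ en : ℕ) : ℝ) ≤ q * R := by
    have h1 : q ^ Nat.log q R ≤ R := Nat.pow_log_le_self q (by omega)
    have h2 : q ^ en = q * q ^ Nat.log q R := by rw [hendef]; ring
    rw [h2]
    push_cast
    have : (q : ℝ) * (q ^ Nat.log q R : ℕ) ≤ (q : ℝ) * R := by
      apply mul_le_mul_of_nonneg_left _ (by positivity)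
      exact_mod_cast h1
    exact_mod_cast this
  have hceil1 : a * lgr ≤ (L : ℝ) := Nat.le_ceil _
  have hceil2 : (L : ℝ) ≤ a * lgr + 1 := by
    have := Nat.ceil_lt_add_one (by positivity : (0:ℝ) ≤ a * lgr)
    rw [hLdef]; linarith
  have hN1 : (R : ℝ) ^ a ≤ (NN : ℝ) := by
    rw [hNNR]
    calc (R : ℝ) ^ a ≤ ((q : ℝ) ^ lgr) ^ a :=
          Real.rpow_le_rpow (by positivity) hRlow ha0.le
      _ = (q : ℝ) ^ (lgr * a) := by rw [← Real.rpow_mul (by positivity)]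
      _ ≤ (q : ℝ) ^ (L : ℝ) := by
          apply Real.rpow_le_rpow_of_exponent_le hq1R
          calc lgr * a = a * lgr := by ring
            _ ≤ (L : ℝ) := hceil1
  have hsqr : ∀ x : ℝ, 0 ≤ x → x ^ (2 : ℝ) = x ^ 2 := by
    intro x hx
    rw [show (2 : ℝ) = ((2 : ℕ) : ℝ) by norm_num, Real.rpow_natCast]
  have hN2 : (NN : ℝ) ≤ (q : ℝ) ^ 3 * (R : ℝ) ^ a := by
    rw [hNNR]
    calc (q : ℝ) ^ (L : ℝ) ≤ (q : ℝ) ^ (a * lgr + 1) :=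
          Real.rpow_le_rpow_of_exponent_le hq1R hceil2
      _ = (q : ℝ) ^ (lgr * a) * q := by
          rw [Real.rpow_add hq0R, Real.rpow_one]; ring_nf
      _ = ((q : ℝ) ^ lgr) ^ a * q := by rw [← Real.rpow_mul (by positivity)]
      _ ≤ ((q : ℝ) * R) ^ a * q := by
          apply mul_le_mul_of_nonneg_right _ (by positivity)
          apply Real.rpow_le_rpow (by positivity) (by rw [hqlgr]; exact hup) ha0.le
      _ = (q : ℝ) ^ a * (R : ℝ) ^ a * q := by
          rw [Real.mul_rpow (by positivity) (by positivity)]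
      _ ≤ (q : ℝ) ^ (2:ℝ) * (R : ℝ) ^ a * q := by
          apply mul_le_mul_of_nonneg_right _ (by positivity)
          apply mul_le_mul_of_nonneg_right _ (by positivity)
          exact Real.rpow_le_rpow_of_exponent_le hq1R ha2
      _ = (q : ℝ) ^ 3 * (R : ℝ) ^ a := by
          rw [hsqr _ hq0R.le]; ring
  have hRNN : (R : ℝ) ≤ (NN : ℝ) := by
    calc (R : ℝ) = (R : ℝ) ^ (1 : ℝ) := (Real.rpow_one _).symm
      _ ≤ (R : ℝ) ^ a := Real.rpow_le_rpow_of_exponent_le hR1 ha1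
      _ ≤ (NN : ℝ) := hN1
  set M : ℕ := NN + R with hMdef
  have hM1 : 1 ≤ M := by omega
  have hM0 : (0 : ℝ) < (M : ℝ) := by exact_mod_cast hM1
  set X : ℝ := C₀ * (M : ℝ) ^ ((1 : ℝ) - c') with hXdef
  have hX0 : 0 ≤ X := by positivity
  have hF : ∀ k : ℕ, ‖∑ m ∈ Finset.range (NN + R),
      f m * e (↑m * ((k : ℝ) / ↑(NN + R)))‖ ≤ X := by
    intro k
    exact hGel' M hM1 ((k : ℝ) / (M : ℝ))
  have hPar := parseval_bound hmod NN R hNN1 hR X hX0 hF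
  have htail : ∀ r : ℕ, ‖T f r NN - (NN : ℂ) * γ r‖ ≤ 4 * r := by
    intro r
    have h := hγ2 r L
    have hcast : ((NN : ℕ) : ℂ) = (q : ℂ) ^ L := by rw [hNNdef]; push_cast; ring
    rw [hcast]
    exact h
  have hper : ∀ r ∈ Finset.range R, ‖γ r‖ ^ 2 ≤
      2 * Complex.normSq (T f r NN) / (NN : ℝ) ^ 2 + 32 * (R : ℝ) ^ 2 / (NN : ℝ) ^ 2 := by
    intro r hrm
    rw [Finset.mem_range] at hrm
    have hNNc : ((NN : ℕ) : ℂ) ≠ 0 := by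
      simp only [ne_eq, Nat.cast_eq_zero]; omega
    have hdec : γ r = T f r NN / (NN : ℂ) - (T f r NN - (NN : ℂ) * γ r) / (NN : ℂ) := by
      field_simp
      ring
    have h1 : ‖γ r‖ ≤ ‖T f r NN‖ / (NN : ℝ) + 4 * R / (NN : ℝ) := by
      rw [hdec]
      have hns := norm_sub_le (T f r NN / (NN : ℂ)) ((T f r NN - (NN : ℂ) * γ r) / (NN : ℂ))
      refine hns.trans ?_
      rw [norm_div, norm_div, Complex.norm_natCast]
      gcongr
      calc ‖T f r NN - (NN : ℂ) * γ r‖ ≤ 4 * r := htail r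
        _ ≤ 4 * R := by
            have : (r : ℝ) ≤ R := by exact_mod_cast hrm.le
            linarith
    have hTnn : (0 : ℝ) ≤ ‖T f r NN‖ := norm_nonneg _
    have hgnn : (0 : ℝ) ≤ ‖γ r‖ := norm_nonneg _
    rw [← Complex.sq_norm]
    have key : (‖T f r NN‖ / (NN : ℝ) + 4 * R / (NN : ℝ)) ^ 2 ≤
        2 * ‖T f r NN‖ ^ 2 / (NN : ℝ) ^ 2 + 32 * (R : ℝ) ^ 2 / (NN : ℝ) ^ 2 := by
      have base : (‖T f r NN‖ + 4 * (R : ℝ)) ^ 2 ≤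
          2 * ‖T f r NN‖ ^ 2 + 32 * (R : ℝ) ^ 2 := by
        nlinarith [sq_nonneg (‖T f r NN‖ - 4 * (R : ℝ))]
      have hrw : 2 * ‖T f r NN‖ ^ 2 / (NN : ℝ) ^ 2 + 32 * (R : ℝ) ^ 2 / (NN : ℝ) ^ 2
          = (2 * ‖T f r NN‖ ^ 2 + 32 * (R : ℝ) ^ 2) / (NN : ℝ) ^ 2 := by ring
      rw [hrw, ← add_div, div_pow]
      gcongr
    calc ‖γ r‖ ^ 2 ≤ (‖T f r NN‖ / (NN : ℝ) + 4 * R / (NN : ℝ)) ^ 2 := by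
          apply pow_le_pow_left₀ hgnn h1
      _ ≤ _ := key
  have hsum : ∑ r ∈ Finset.range R, ‖γ r‖ ^ 2 ≤
      2 * (X ^ 2 * NN) / (NN : ℝ) ^ 2 + 32 * (R : ℝ) ^ 3 / (NN : ℝ) ^ 2 := by
    calc ∑ r ∈ Finset.range R, ‖γ r‖ ^ 2
        ≤ ∑ r ∈ Finset.range R, (2 * Complex.normSq (T f r NN) / (NN : ℝ) ^ 2 +
            32 * (R : ℝ) ^ 2 / (NN : ℝ) ^ 2) := Finset.sum_le_sum hper
      _ = (2 / (NN : ℝ) ^ 2) * (∑ r ∈ Finset.range R, Complex.normSq (T f r NN)) +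
            (R : ℝ) * (32 * (R : ℝ) ^ 2 / (NN : ℝ) ^ 2) := by
          rw [Finset.sum_add_distrib, Finset.sum_const, Finset.mul_sum, Finset.card_range,
            nsmul_eq_mul]
          congr 1
          apply Finset.sum_congr rfl
          intro r _
          ring
      _ ≤ (2 / (NN : ℝ) ^ 2) * (X ^ 2 * NN) + (R : ℝ) * (32 * (R : ℝ) ^ 2 / (NN : ℝ) ^ 2) := by
          apply add_le_add_left
          apply mul_le_mul_of_nonneg_left hPar (by positivity)
      _ = 2 * (X ^ 2 * NN) / (NN : ℝ) ^ 2 + 32 * (R : ℝ) ^ 3 / (NN : ℝ) ^ 2 := by ring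
  -- term estimates
  have hMle : (M : ℝ) ≤ 2 * NN := by
    rw [hMdef]; push_cast; linarith
  have hexp0 : (0 : ℝ) ≤ 2 - 2 * c' := by linarith
  have ha_eq : a * (1 - c') = 1 := by rw [hadef]; field_simp
  have hexp1 : (0:ℝ) ≤ 1 - 2 * c' := by linarith
  have hterm1 : 2 * (X ^ 2 * NN) / (NN : ℝ) ^ 2 ≤
      8 * C₀ ^ 2 * (q : ℝ) ^ 3 * (R : ℝ) ^ ((1 : ℝ) - c') := by
    have hX2 : X ^ 2 = C₀ ^ 2 * (M : ℝ) ^ (2 - 2 * c') := by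
      have h0 : X ^ 2 = C₀ ^ 2 * ((M : ℝ) ^ ((1 : ℝ) - c')) ^ 2 := by rw [hXdef]; ring
      rw [h0]
      congr 1
      rw [← Real.rpow_natCast ((M : ℝ) ^ ((1 : ℝ) - c')) 2, ← Real.rpow_mul hM0.le]
      congr 1
      push_cast
      ring
    have hMest : (M : ℝ) ^ (2 - 2 * c') ≤ 4 * (NN : ℝ) ^ (2 - 2 * c') := by
      calc (M : ℝ) ^ (2 - 2 * c') ≤ ((2 : ℝ) * NN) ^ (2 - 2 * c') :=
            Real.rpow_le_rpow hM0.le hMle hexp0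
        _ = 2 ^ (2 - 2 * c') * (NN : ℝ) ^ (2 - 2 * c') :=
            Real.mul_rpow (by norm_num) hNN0.le
        _ ≤ 4 * (NN : ℝ) ^ (2 - 2 * c') := by
            apply mul_le_mul_of_nonneg_right _ (by positivity)
            calc (2 : ℝ) ^ (2 - 2 * c') ≤ 2 ^ (2 : ℝ) :=
                  Real.rpow_le_rpow_of_exponent_le (by norm_num) (by linarith)
              _ = 4 := by rw [hsqr 2 (by norm_num)]; norm_num
    have hNNcomb : (NN : ℝ) ^ (2 - 2 * c') / (NN : ℝ) = (NN : ℝ) ^ (1 - 2 * c') := by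
      have h := Real.rpow_sub hNN0 (2 - 2 * c') 1
      rw [Real.rpow_one] at h
      rw [← h]
      congr 1
      ring
    have hNNle : (NN : ℝ) ^ (1 - 2 * c') ≤ (q : ℝ) ^ 3 * (R : ℝ) ^ ((1 : ℝ) - c') := by
      calc (NN : ℝ) ^ (1 - 2 * c') ≤ ((q : ℝ) ^ 3 * (R : ℝ) ^ a) ^ (1 - 2 * c') :=
            Real.rpow_le_rpow hNN0.le hN2 hexp1
        _ = ((q : ℝ) ^ 3) ^ (1 - 2 * c') * ((R : ℝ) ^ a) ^ (1 - 2 * c') :=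
            Real.mul_rpow (by positivity) (by positivity)
        _ ≤ (q : ℝ) ^ 3 * (R : ℝ) ^ (a * (1 - 2 * c')) := by
            apply mul_le_mul _ (le_of_eq (Real.rpow_mul hR0.le a _).symm)
              (by positivity) (by positivity)
            calc ((q : ℝ) ^ 3) ^ (1 - 2 * c') ≤ ((q : ℝ) ^ 3) ^ (1 : ℝ) := by
                  apply Real.rpow_le_rpow_of_exponent_le _ (by linarith)
                  exact one_le_pow₀ hq1R
              _ = (q : ℝ) ^ 3 := Real.rpow_one _
        _ ≤ (q : ℝ) ^ 3 * (R : ℝ) ^ ((1 : ℝ) - c') := by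
            apply mul_le_mul_of_nonneg_left _ (by positivity)
            apply Real.rpow_le_rpow_of_exponent_le hR1
            nlinarith [ha_eq, mul_le_mul_of_nonneg_right ha1 hc'pos.le]
    calc 2 * (X ^ 2 * NN) / (NN : ℝ) ^ 2 = 2 * X ^ 2 / NN := by
          field_simp
      _ = 2 * C₀ ^ 2 * (M : ℝ) ^ (2 - 2 * c') / NN := by rw [hX2]; ring
      _ ≤ 2 * C₀ ^ 2 * (4 * (NN : ℝ) ^ (2 - 2 * c')) / NN := by gcongr
      _ = 8 * C₀ ^ 2 * ((NN : ℝ) ^ (2 - 2 * c') / NN) := by ring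
      _ = 8 * C₀ ^ 2 * (NN : ℝ) ^ (1 - 2 * c') := by rw [hNNcomb]
      _ ≤ 8 * C₀ ^ 2 * ((q : ℝ) ^ 3 * (R : ℝ) ^ ((1 : ℝ) - c')) := by
          apply mul_le_mul_of_nonneg_left hNNle (by positivity)
      _ = 8 * C₀ ^ 2 * (q : ℝ) ^ 3 * (R : ℝ) ^ ((1 : ℝ) - c') := by ring
  have hterm2 : 32 * (R : ℝ) ^ 3 / (NN : ℝ) ^ 2 ≤ 32 * (R : ℝ) ^ ((1 : ℝ) - c') := by
    have h2a : (R : ℝ) ^ (2 * a) ≤ (NN : ℝ) ^ 2 := by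
      have hp := pow_le_pow_left₀ (by positivity : (0:ℝ) ≤ (R : ℝ) ^ a) hN1 2
      calc (R : ℝ) ^ (2 * a) = ((R : ℝ) ^ a) ^ 2 := by
            rw [show 2 * a = a * 2 by ring, Real.rpow_mul hR0.le, hsqr _ (by positivity)]
        _ ≤ (NN : ℝ) ^ 2 := hp
    have hR3 : (R : ℝ) ^ (3 : ℕ) = (R : ℝ) ^ ((3 : ℝ)) := by
      rw [← Real.rpow_natCast (R : ℝ) 3]
      norm_num
    calc 32 * (R : ℝ) ^ 3 / (NN : ℝ) ^ 2 ≤ 32 * (R : ℝ) ^ 3 / (R : ℝ) ^ (2 * a) := by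
          gcongr
        _ = 32 * (R : ℝ) ^ ((3 : ℝ) - 2 * a) := by
          rw [show (32 : ℝ) * (R : ℝ) ^ 3 / (R : ℝ) ^ (2 * a)
              = 32 * ((R : ℝ) ^ (3 : ℕ) / (R : ℝ) ^ (2 * a)) from by ring, hR3,
            ← Real.rpow_sub hR0]
        _ ≤ 32 * (R : ℝ) ^ ((1 : ℝ) - c') := by
          apply mul_le_mul_of_nonneg_left _ (by norm_num)
          apply Real.rpow_le_rpow_of_exponent_le hR1
          nlinarith [ha_eq, mul_le_mul_of_nonneg_right ha1 hc'pos.le]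
  have hfinal : ∑ r ∈ Finset.range R, ‖γ r‖ ^ 2 ≤
      (8 * C₀ ^ 2 * (q : ℝ) ^ 3 + 32) * (R : ℝ) ^ ((1 : ℝ) - c') := by
    calc ∑ r ∈ Finset.range R, ‖γ r‖ ^ 2
        ≤ 2 * (X ^ 2 * NN) / (NN : ℝ) ^ 2 + 32 * (R : ℝ) ^ 3 / (NN : ℝ) ^ 2 := hsum
      _ ≤ 8 * C₀ ^ 2 * (q : ℝ) ^ 3 * (R : ℝ) ^ ((1 : ℝ) - c')
            + 32 * (R : ℝ) ^ ((1 : ℝ) - c') := add_le_add hterm1 hterm2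
      _ = (8 * C₀ ^ 2 * (q : ℝ) ^ 3 + 32) * (R : ℝ) ^ ((1 : ℝ) - c') := by ring
  rw [div_le_iff₀ hR0]
  calc ∑ r ∈ Finset.range R, ‖γ r‖ ^ 2
      ≤ (8 * C₀ ^ 2 * (q : ℝ) ^ 3 + 32) * (R : ℝ) ^ ((1 : ℝ) - c') := hfinal
    _ = (8 * C₀ ^ 2 * (q : ℝ) ^ 3 + 32) * (R : ℝ) ^ (-c') * R := by
        rw [show (1 : ℝ) - c' = -c' + 1 by ring, Real.rpow_add hR0, Real.rpow_one]
        ring
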